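/- There exists a constant C > 0 such that for every time step k with 0 < k ≤ 1, every integer n ≥ 1, and every measurable function g : [0, n·k] → [0, ∞) with ∫_0^{nk} min(1, t)·g(t)² dt < ∞, setting t_i = i·k, one has (1/k)·∑_{i=1}^{n} ( ∫_{t_{i−1}}^{t_i} (t − t_{i−1})·g(t) dt )² ≤ C·k·(1 + log(1/k))·∫_0^{nk} min(1, t)·g(t)² dt. -/

import Mathlib

open MeasureTheory

lemma cs_aux {s : Set ℝ} (hs : MeasurableSet s) (hfin : MeasureTheory.volume s ≠ ⊤)
    {f : ℝ → ℝ} (hf : Measurable f) (h0 : ∀ x ∈ s, 0 ≤ f x)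
    (hint : MeasureTheory.IntegrableOn (fun x => f x ^ 2) s) :
    (∫ x in s, f x) ^ 2 ≤ (MeasureTheory.volume s).toReal * ∫ x in s, f x ^ 2 := by
  set μ := MeasureTheory.volume.restrict s with hμ
  haveI : IsFiniteMeasure μ := ⟨by simpa [μ, Measure.restrict_apply_univ] using hfin.lt_top⟩
  have hmem : MemLp f 2 μ :=
    (memLp_two_iff_integrable_sq hf.aestronglyMeasurable).2 hint
  have hone : MemLp (fun _ : ℝ => (1:ℝ)) 2 μ := memLp_const 1
  have hpq : Real.HolderConjugate 2 2 := Real.HolderConjugate.two_two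
  have h0ae : 0 ≤ᵐ[μ] f := (ae_restrict_iff' hs).2 (Filter.Eventually.of_forall h0)
  have h1ae : 0 ≤ᵐ[μ] (fun _ : ℝ => (1:ℝ)) := Filter.Eventually.of_forall (fun _ => zero_le_one)
  have key := MeasureTheory.integral_mul_le_Lp_mul_Lq_of_nonneg hpq h0ae h1ae
    (by simpa using hmem) (by simpa using hone)
  have hrw : ∀ x : ℝ, f x ^ (2:ℝ) = f x ^ 2 := fun x => by
    rw [show (2:ℝ) = ((2:ℕ):ℝ) by norm_num, Real.rpow_natCast]
  simp only [mul_one, Real.one_rpow, hrw, integral_const, smul_eq_mul] at key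
  have hA : (0:ℝ) ≤ ∫ x, f x ^ 2 ∂μ := integral_nonneg (fun x => sq_nonneg _)
  have hB : (0:ℝ) ≤ (μ Set.univ).toReal := ENNReal.toReal_nonneg
  have hL : (0:ℝ) ≤ ∫ x, f x ∂μ := integral_nonneg_of_ae h0ae
  have hμs : (μ Set.univ).toReal = (MeasureTheory.volume s).toReal := by
    simp [μ, Measure.restrict_apply_univ]
  have h2 : (∫ x, f x ∂μ) ^ 2 ≤
      ((∫ x, f x ^ 2 ∂μ) ^ ((1:ℝ)/2) * ((μ Set.univ).toReal) ^ ((1:ℝ)/2)) ^ 2 := by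
    apply pow_le_pow_left₀ hL
    exact key
  calc (∫ x, f x ∂μ) ^ 2 ≤ _ := h2
    _ = (∫ x, f x ^ 2 ∂μ) * (μ Set.univ).toReal := by
        rw [mul_pow, ← Real.rpow_natCast ((∫ x, f x ^ 2 ∂μ) ^ ((1:ℝ)/2)),
          ← Real.rpow_natCast (((μ Set.univ).toReal) ^ ((1:ℝ)/2)),
          ← Real.rpow_mul hA, ← Real.rpow_mul hB]
        norm_num
    _ = (MeasureTheory.volume s).toReal * ∫ x, f x ^ 2 ∂μ := by rw [hμs, mul_comm]

/-- Weighted ℓ² bound on the local backward-Euler truncation sums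
(core of Lemma 5.1, case r = 0). -/
theorem truncation_sum_bound_r0 :
    ∃ C : ℝ, 0 < C ∧
      ∀ k : ℝ, 0 < k → k ≤ 1 → ∀ n : ℕ, 1 ≤ n →
        ∀ g : ℝ → ℝ, Measurable g →
          (∀ t ∈ Set.Icc (0:ℝ) ((n : ℝ) * k), 0 ≤ g t) →
          MeasureTheory.IntegrableOn (fun t => min 1 t * (g t) ^ 2)
            (Set.Icc (0:ℝ) ((n : ℝ) * k)) →
          (1 / k) * ∑ i ∈ Finset.Icc 1 n,
              (∫ t in (((i : ℝ) - 1) * k)..((i : ℝ) * k),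
                (t - ((i : ℝ) - 1) * k) * g t) ^ 2 ≤
            C * k * (1 + Real.log (1 / k)) *
              ∫ t in (0:ℝ)..((n : ℝ) * k), min 1 t * (g t) ^ 2 := by
  refine ⟨1, one_pos, ?_⟩
  intro k hk hk1 n hn g hgm hg0 hg2
  have hsub : ∀ i : ℕ, 1 ≤ i → i ≤ n →
      Set.Ioc (((i : ℝ) - 1) * k) ((i : ℝ) * k) ⊆ Set.Icc (0:ℝ) ((n : ℝ) * k) := by
    intro i hi1 hin t ht
    have h1i : (1:ℝ) ≤ (i:ℝ) := by exact_mod_cast hi1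
    have hiN : (i:ℝ) ≤ (n:ℝ) := by exact_mod_cast hin
    constructor
    · have : 0 ≤ ((i:ℝ) - 1) * k := mul_nonneg (by linarith) hk.le
      linarith [ht.1]
    · have : (i:ℝ) * k ≤ (n:ℝ) * k := mul_le_mul_of_nonneg_right hiN hk.le
      linarith [ht.2]
  -- per-interval integrability of the weighted integrand
  have hIi : ∀ i : ℕ, 1 ≤ i → i ≤ n →
      MeasureTheory.IntegrableOn (fun t => min 1 t * (g t) ^ 2)
        (Set.Ioc (((i : ℝ) - 1) * k) ((i : ℝ) * k)) := fun i hi1 hin =>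
    hg2.mono_set (hsub i hi1 hin)
  -- pointwise bound
  have hpt : ∀ i : ℕ, 1 ≤ i → ∀ t ∈ Set.Ioc (((i : ℝ) - 1) * k) ((i : ℝ) * k),
      ((t - ((i : ℝ) - 1) * k) * g t) ^ 2 ≤ k * (min 1 t * (g t) ^ 2) := by
    intro i hi1 t ht
    have h1i : (1:ℝ) ≤ (i:ℝ) := by exact_mod_cast hi1
    have ha0 : 0 ≤ ((i:ℝ) - 1) * k := mul_nonneg (by linarith) hk.le
    have hw0 : 0 ≤ t - ((i:ℝ) - 1) * k := le_of_lt (by linarith [ht.1])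
    have hwk : t - ((i:ℝ) - 1) * k ≤ k := by nlinarith [ht.2]
    have hwt : t - ((i:ℝ) - 1) * k ≤ t := by linarith
    have hkey : (t - ((i:ℝ) - 1) * k) ^ 2 ≤ k * min 1 t := by
      rcases le_total (1:ℝ) t with h | h
      · rw [min_eq_left h]; nlinarith
      · rw [min_eq_right h]; nlinarith
    calc ((t - ((i:ℝ) - 1) * k) * g t) ^ 2
        = (t - ((i:ℝ) - 1) * k) ^ 2 * (g t) ^ 2 := by ring
      _ ≤ (k * min 1 t) * (g t) ^ 2 := by
          exact mul_le_mul_of_nonneg_right hkey (sq_nonneg _)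
      _ = k * (min 1 t * (g t) ^ 2) := by ring
  -- integrability of the squared integrand
  have hsq : ∀ i : ℕ, 1 ≤ i → i ≤ n →
      MeasureTheory.IntegrableOn (fun t => ((t - ((i : ℝ) - 1) * k) * g t) ^ 2)
        (Set.Ioc (((i : ℝ) - 1) * k) ((i : ℝ) * k)) := by
    intro i hi1 hin
    apply Integrable.mono' ((hIi i hi1 hin).const_mul k)
    · exact (((measurable_id.sub measurable_const).mul hgm).pow_const 2).aestronglyMeasurable
    · refine (ae_restrict_iff' measurableSet_Ioc).2 (Filter.Eventually.of_forall ?_)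
      intro t ht
      rw [Real.norm_eq_abs, abs_of_nonneg (sq_nonneg _)]
      exact hpt i hi1 t ht
  have hab : ∀ i : ℕ, (((i : ℝ) - 1) * k) ≤ (i : ℝ) * k := by
    intro i
    have : ((i:ℝ) - 1) ≤ (i:ℝ) := by linarith
    exact mul_le_mul_of_nonneg_right this hk.le
  -- per-interval bound
  have hterm : ∀ i : ℕ, 1 ≤ i → i ≤ n →
      (∫ t in (((i : ℝ) - 1) * k)..((i : ℝ) * k), (t - ((i : ℝ) - 1) * k) * g t) ^ 2 ≤
        k ^ 2 * ∫ t in Set.Ioc (((i : ℝ) - 1) * k) ((i : ℝ) * k), min 1 t * (g t) ^ 2 := by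
    intro i hi1 hin
    rw [intervalIntegral.integral_of_le (hab i)]
    have hvol : (MeasureTheory.volume (Set.Ioc (((i : ℝ) - 1) * k) ((i : ℝ) * k))).toReal = k := by
      rw [Real.volume_Ioc, ENNReal.toReal_ofReal (by linarith [hab i])]
      ring
    have h0f : ∀ t ∈ Set.Ioc (((i : ℝ) - 1) * k) ((i : ℝ) * k),
        0 ≤ (t - ((i : ℝ) - 1) * k) * g t := by
      intro t ht
      have h1i : (1:ℝ) ≤ (i:ℝ) := by exact_mod_cast hi1
      have ha0 : 0 ≤ ((i:ℝ) - 1) * k := mul_nonneg (by linarith) hk.le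
      exact mul_nonneg (by linarith [ht.1]) (hg0 t (hsub i hi1 hin ht))
    have hcs := cs_aux measurableSet_Ioc (by simp [Real.volume_Ioc])
      ((measurable_id.sub measurable_const).mul hgm) h0f (hsq i hi1 hin)
    rw [hvol] at hcs
    have hmono : ∫ t in Set.Ioc (((i : ℝ) - 1) * k) ((i : ℝ) * k),
        ((t - ((i : ℝ) - 1) * k) * g t) ^ 2 ≤
        k * ∫ t in Set.Ioc (((i : ℝ) - 1) * k) ((i : ℝ) * k), min 1 t * (g t) ^ 2 := by
      rw [← MeasureTheory.integral_const_mul]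
      exact MeasureTheory.setIntegral_mono_on (hsq i hi1 hin)
        ((hIi i hi1 hin).const_mul k) measurableSet_Ioc (hpt i hi1)
    calc (∫ t in Set.Ioc (((i : ℝ) - 1) * k) ((i : ℝ) * k), (t - ((i : ℝ) - 1) * k) * g t) ^ 2
        ≤ k * ∫ t in Set.Ioc (((i : ℝ) - 1) * k) ((i : ℝ) * k),
            ((t - ((i : ℝ) - 1) * k) * g t) ^ 2 := hcs
      _ ≤ k * (k * ∫ t in Set.Ioc (((i : ℝ) - 1) * k) ((i : ℝ) * k), min 1 t * (g t) ^ 2) :=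
          mul_le_mul_of_nonneg_left hmono hk.le
      _ = k ^ 2 * ∫ t in Set.Ioc (((i : ℝ) - 1) * k) ((i : ℝ) * k), min 1 t * (g t) ^ 2 := by
          ring
  -- decompose total integral
  have hadj : ∑ j ∈ Finset.range n,
      ∫ t in ((j : ℝ) * k)..(((j : ℝ) + 1) * k), min 1 t * (g t) ^ 2 =
      ∫ t in (0:ℝ)..((n : ℝ) * k), min 1 t * (g t) ^ 2 := by
    have key := intervalIntegral.sum_integral_adjacent_intervals (a := fun j : ℕ => (j : ℝ) * k)
      (μ := MeasureTheory.volume) (f := fun t => min 1 t * (g t) ^ 2) (n := n) ?_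
    · push_cast at key
      simpa using key
    · intro j hj
      have hle : (j:ℝ) * k ≤ (((j+1) : ℕ) : ℝ) * k := by push_cast; nlinarith
      rw [intervalIntegrable_iff_integrableOn_Ioc_of_le hle]
      apply hg2.mono_set
      intro t ht
      obtain ⟨ht1, ht2⟩ := ht
      have hj' : (j:ℝ) + 1 ≤ (n:ℝ) := by exact_mod_cast Nat.succ_le_of_lt hj
      push_cast at ht2
      have hjk : 0 ≤ (j:ℝ) * k := by positivity
      constructor
      · linarith
      · nlinarith
  -- reindex the sum
  have hreindex : ∑ i ∈ Finset.Icc 1 n,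
      (∫ t in Set.Ioc (((i : ℝ) - 1) * k) ((i : ℝ) * k), min 1 t * (g t) ^ 2) =
      ∑ j ∈ Finset.range n, ∫ t in ((j : ℝ) * k)..(((j : ℝ) + 1) * k), min 1 t * (g t) ^ 2 := by
    rw [show Finset.Icc 1 n = Finset.Ico 1 (n+1) from by rw [Finset.Ico_add_one_right_eq_Icc],
      Finset.sum_Ico_eq_sum_range]
    simp only [Nat.add_sub_cancel]
    apply Finset.sum_congr rfl
    intro j hj
    rw [intervalIntegral.integral_of_le (by
      have : ((j:ℝ)) ≤ ((j:ℝ)+1) := by linarith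
      exact mul_le_mul_of_nonneg_right this hk.le)]
    congr 2 <;> push_cast <;> ring
  -- total nonneg
  set T := ∫ t in (0:ℝ)..((n : ℝ) * k), min 1 t * (g t) ^ 2 with hT
  have hT0 : 0 ≤ T := by
    apply intervalIntegral.integral_nonneg
    · positivity
    · intro u hu
      exact mul_nonneg (le_min zero_le_one hu.1) (sq_nonneg _)
  have hsum : ∑ i ∈ Finset.Icc 1 n,
      (∫ t in (((i : ℝ) - 1) * k)..((i : ℝ) * k), (t - ((i : ℝ) - 1) * k) * g t) ^ 2 ≤
      k ^ 2 * T := by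
    calc ∑ i ∈ Finset.Icc 1 n,
        (∫ t in (((i : ℝ) - 1) * k)..((i : ℝ) * k), (t - ((i : ℝ) - 1) * k) * g t) ^ 2
        ≤ ∑ i ∈ Finset.Icc 1 n,
          k ^ 2 * ∫ t in Set.Ioc (((i : ℝ) - 1) * k) ((i : ℝ) * k), min 1 t * (g t) ^ 2 := by
          apply Finset.sum_le_sum
          intro i hi
          exact hterm i (Finset.mem_Icc.1 hi).1 (Finset.mem_Icc.1 hi).2
      _ = k ^ 2 * T := by rw [← Finset.mul_sum, hreindex, hadj]
  have hlog : 0 ≤ Real.log (1 / k) := Real.log_nonneg (by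
    rw [le_div_iff₀ hk]; linarith)
  have hS0 := hsum
  have h1k : 0 < 1 / k := by positivity
  calc (1 / k) * ∑ i ∈ Finset.Icc 1 n,
      (∫ t in (((i : ℝ) - 1) * k)..((i : ℝ) * k), (t - ((i : ℝ) - 1) * k) * g t) ^ 2
      ≤ (1 / k) * (k ^ 2 * T) := mul_le_mul_of_nonneg_left hsum h1k.le
    _ = k * T := by field_simp
    _ ≤ 1 * k * (1 + Real.log (1 / k)) * T := by nlinarith [mul_nonneg (mul_nonneg hk.le hlog) hT0]
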